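/- If S is a rectangular band semigroup and ω is a separable weight on S ≅ L × R (L a left zero semigroup, R a right zero semigroup), then ℓ¹(S, ω) is biprojective. -/

import Mathlib

open scoped TensorProduct
open Filter
open scoped Classical

/-- A weight on a semigroup: strictly positive and submultiplicative. -/
def IsWeight {S : Type*} [Mul S] (ω : S → ℝ) : Prop :=
  (∀ s, 0 < ω s) ∧ ∀ s t, ω (s * t) ≤ ω s * ω t

/-- A characterization of the Beurling algebra `ℓ¹(S, ω)`: a Banach algebra `A`
together with point masses `delta` and coefficient functionals such that every
element is the ℓ¹-sum of its coefficients against the point masses, with the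
weighted ℓ¹-norm, and `delta` is multiplicative (`δ_s * δ_t = δ_{st}`). -/
structure BeurlingStructure (S : Type*) [Mul S] (ω : S → ℝ) (A : Type*)
    [NormedRing A] [NormedAlgebra ℂ A] where
  delta : S → A
  coeff : A →ₗ[ℂ] (S → ℂ)
  delta_mul : ∀ s t : S, delta s * delta t = delta (s * t)
  coeff_delta : ∀ s t : S, coeff (delta s) t = if t = s then 1 else 0
  hasSum_coeff : ∀ a : A, HasSum (fun s => coeff a s • delta s) a
  norm_eq : ∀ a : A, ‖a‖ = ∑' s, ‖coeff a s‖ * ω s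

/-- A pair of commuting continuous left/right module actions of a Banach algebra,
making `E` a Banach `A`-bimodule. -/
def IsBimodule {A : Type*} [NormedRing A] [NormedAlgebra ℂ A]
    {E : Type*} [NormedAddCommGroup E] [NormedSpace ℂ E]
    (l r : A →L[ℂ] E →L[ℂ] E) : Prop :=
  (∀ a b : A, l (a * b) = (l a).comp (l b)) ∧
  (∀ a b : A, r (a * b) = (r b).comp (r a)) ∧
  (∀ a b : A, (l a).comp (r b) = (r b).comp (l a))

/-- Amenability of a Banach algebra: every bounded derivation into the dual of a
Banach bimodule is inner.  (The dual bimodule actions are `(a·f)(x) = f(x·a)` and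
`(f·a)(x) = f(a·x)`.) -/
def IsAmenable (A : Type*) [NormedRing A] [NormedAlgebra ℂ A] : Prop :=
  ∀ (E : Type) [NormedAddCommGroup E] [NormedSpace ℂ E]
    (l r : A →L[ℂ] E →L[ℂ] E), IsBimodule l r →
    ∀ D : A →L[ℂ] (E →L[ℂ] ℂ),
      (∀ a b : A, D (a * b) = (D b).comp (r a) + (D a).comp (l b)) →
      ∃ f : E →L[ℂ] ℂ, ∀ a : A, D a = f.comp (r a) - f.comp (l a)

/-- The projective tensor norm of an element of the algebraic tensor product. -/
noncomputable def projNorm (A B : Type*) [NormedAddCommGroup A] [NormedSpace ℂ A]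
    [NormedAddCommGroup B] [NormedSpace ℂ B] (u : A ⊗[ℂ] B) : ℝ :=
  sInf {r : ℝ | ∃ (n : ℕ) (f : Fin n → A) (g : Fin n → B),
    u = ∑ i, f i ⊗ₜ[ℂ] g i ∧ r = ∑ i, ‖f i‖ * ‖g i‖}

/-- Left action `a • (x ⊗ y) = (a*x) ⊗ y` on `A ⊗ A`. -/
noncomputable def tmulLeft {A : Type*} [NormedRing A] [NormedAlgebra ℂ A] (a : A) :
    A ⊗[ℂ] A →ₗ[ℂ] A ⊗[ℂ] A :=
  TensorProduct.map (LinearMap.mulLeft ℂ a) LinearMap.id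

/-- Right action `(x ⊗ y) • a = x ⊗ (y*a)` on `A ⊗ A`. -/
noncomputable def tmulRight {A : Type*} [NormedRing A] [NormedAlgebra ℂ A] (a : A) :
    A ⊗[ℂ] A →ₗ[ℂ] A ⊗[ℂ] A :=
  TensorProduct.map LinearMap.id (LinearMap.mulRight ℂ a)

/-- Pseudo-amenability: existence of an approximate diagonal.  (Since the algebraic
tensor product is dense in `A ⊗̂ A` in the projective norm, the approximate diagonal
may be taken in the algebraic tensor product, with the module-action conditions
measured in the projective tensor norm.) -/
def IsPseudoAmenable (A : Type*) [NormedRing A] [NormedAlgebra ℂ A] : Prop :=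
  ∃ (ι : Type) (l : Filter ι), l.NeBot ∧ ∃ m : ι → A ⊗[ℂ] A,
    (∀ a : A, Tendsto (fun i => projNorm A A (tmulLeft a (m i) - tmulRight a (m i)))
        l (nhds 0)) ∧
    (∀ a : A, Tendsto (fun i => a * LinearMap.mul' ℂ A (m i)) l (nhds a))

/-- A witness for biprojectivity of `A`: a realization `X` of the completed projective
tensor product `A ⊗̂ A` (with its bimodule actions and multiplication map `pihat`),
together with a bounded bimodule homomorphism `rho : A → A ⊗̂ A` with `π ∘ ρ = id`. -/
structure BiprojectiveWitness (A : Type*) [NormedRing A] [NormedAlgebra ℂ A] where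
  X : Type
  [grp : NormedAddCommGroup X]
  [mod : NormedSpace ℂ X]
  [compl : CompleteSpace X]
  incl : A ⊗[ℂ] A →ₗ[ℂ] X
  dense_incl : DenseRange incl
  norm_incl : ∀ u, ‖incl u‖ = projNorm A A u
  lact : A →L[ℂ] X →L[ℂ] X
  ract : A →L[ℂ] X →L[ℂ] X
  bimod : IsBimodule lact ract
  lact_incl : ∀ (a : A) u, lact a (incl u) = incl (tmulLeft a u)
  ract_incl : ∀ (a : A) u, ract a (incl u) = incl (tmulRight a u)
  pihat : X →L[ℂ] A
  pihat_incl : ∀ u, pihat (incl u) = LinearMap.mul' ℂ A u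
  rho : A →L[ℂ] X
  rho_left : ∀ a b : A, rho (a * b) = lact a (rho b)
  rho_right : ∀ a b : A, rho (a * b) = ract b (rho a)
  pihat_rho : ∀ a : A, pihat (rho a) = a

attribute [instance] BiprojectiveWitness.grp BiprojectiveWitness.mod
  BiprojectiveWitness.compl

/-- `A` is biprojective. -/
def IsBiprojective (A : Type*) [NormedRing A] [NormedAlgebra ℂ A] : Prop :=
  Nonempty (BiprojectiveWitness A)

/-- A witness for biflatness of `A`: a realization `X` of `A ⊗̂ A` together with a
bounded bimodule homomorphism `rho : A → (A ⊗̂ A)**` with `π** ∘ ρ = k_A`. -/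
structure BiflatWitness (A : Type*) [NormedRing A] [NormedAlgebra ℂ A] where
  X : Type
  [grp : NormedAddCommGroup X]
  [mod : NormedSpace ℂ X]
  [compl : CompleteSpace X]
  incl : A ⊗[ℂ] A →ₗ[ℂ] X
  dense_incl : DenseRange incl
  norm_incl : ∀ u, ‖incl u‖ = projNorm A A u
  lact : A →L[ℂ] X →L[ℂ] X
  ract : A →L[ℂ] X →L[ℂ] X
  bimod : IsBimodule lact ract
  lact_incl : ∀ (a : A) u, lact a (incl u) = incl (tmulLeft a u)
  ract_incl : ∀ (a : A) u, ract a (incl u) = incl (tmulRight a u)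
  pihat : X →L[ℂ] A
  pihat_incl : ∀ u, pihat (incl u) = LinearMap.mul' ℂ A u
  rho : A →L[ℂ] ((X →L[ℂ] ℂ) →L[ℂ] ℂ)
  rho_left : ∀ (a b : A) (f : X →L[ℂ] ℂ), rho (a * b) f = rho b (f.comp (lact a))
  rho_right : ∀ (a b : A) (f : X →L[ℂ] ℂ), rho (a * b) f = rho a (f.comp (ract b))
  pihat_rho : ∀ (a : A) (g : A →L[ℂ] ℂ), rho a (g.comp pihat) = g a

/-- `A` is biflat. -/
def IsBiflat (A : Type*) [NormedRing A] [NormedAlgebra ℂ A] : Prop :=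
  Nonempty (BiflatWitness A)

/-- A realization of the completed projective tensor product `A ⊗̂ B` of two Banach
spaces: a Banach space in which the algebraic tensor product sits densely and
isometrically for the projective tensor norm. -/
structure ProjTensorWitness (A B : Type*) [NormedAddCommGroup A] [NormedSpace ℂ A]
    [NormedAddCommGroup B] [NormedSpace ℂ B] where
  X : Type
  [grp : NormedAddCommGroup X]
  [mod : NormedSpace ℂ X]
  [compl : CompleteSpace X]
  incl : A ⊗[ℂ] B →ₗ[ℂ] X
  dense_incl : DenseRange incl
  norm_incl : ∀ u, ‖incl u‖ = projNorm A B u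

attribute [instance] ProjTensorWitness.grp ProjTensorWitness.mod ProjTensorWitness.compl

/-- The principal ideal `S¹ s S¹` generated by `s`, inside the unitization `S¹`. -/
def principalIdeal {S : Type*} [Semigroup S] (s : S) : Set (WithOne S) :=
  {x | ∃ u v : WithOne S, x = u * (s : WithOne S) * v}

/-- The Green-type relation `s τ t ↔ S¹sS¹ = S¹tS¹`. -/
def bandTau {S : Type*} [Semigroup S] (s t : S) : Prop :=
  principalIdeal s = principalIdeal t

/-- Amenability of a (topological) group: existence of a left-invariant mean on the
bounded continuous functions. -/
def GroupIsAmenable (G : Type*) [Group G] [TopologicalSpace G] [IsTopologicalGroup G] :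
    Prop :=
  ∃ m : BoundedContinuousFunction G ℝ →L[ℝ] ℝ,
    m 1 = 1 ∧ (∀ f, 0 ≤ f → 0 ≤ m f) ∧
    ∀ (g : G) (f : BoundedContinuousFunction G ℝ),
      m (f.compContinuous ⟨fun x => g * x, continuous_mul_left g⟩) = m f

/-- A characterization of the Beurling algebra `L¹(G, ω)` of a locally compact group
with Haar measure `μ`: a Banach algebra `A` whose elements are represented by
`ω`-integrable functions on `G`, with the weighted `L¹` norm and convolution product. -/
structure GroupBeurlingStructure (G : Type*) [Group G] [MeasurableSpace G]
    (μ : MeasureTheory.Measure G) (ω : G → ℝ) (A : Type*) [NormedRing A] [NormedAlgebra ℂ A] where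
  toFun : A → G → ℂ
  integrable : ∀ a, MeasureTheory.Integrable (fun g => ‖toFun a g‖ * ω g) μ
  map_add : ∀ a b : A, toFun (a + b) =ᶠ[MeasureTheory.ae μ] toFun a + toFun b
  map_smul : ∀ (c : ℂ) (a : A), toFun (c • a) =ᶠ[MeasureTheory.ae μ] c • toFun a
  eq_zero : ∀ a : A, toFun a =ᶠ[MeasureTheory.ae μ] 0 → a = 0
  norm_eq : ∀ a : A, ‖a‖ = ∫ g, ‖toFun a g‖ * ω g ∂μ
  map_mul : ∀ a b : A, toFun (a * b) =ᶠ[MeasureTheory.ae μ]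
    fun x => ∫ t, toFun a t * toFun b (t⁻¹ * x) ∂μ
  surjective : ∀ f : G → ℂ, Measurable f →
    MeasureTheory.Integrable (fun g => ‖f g‖ * ω g) μ → ∃ a, toFun a =ᶠ[MeasureTheory.ae μ] f

/-! ### Auxiliary development for `stmt7` -/

noncomputable section Stmt7Aux

open UniformSpace

section ProjNorm

variable {A B : Type*} [NormedAddCommGroup A] [NormedSpace ℂ A]
  [NormedAddCommGroup B] [NormedSpace ℂ B]

/-- The set of representation values defining `projNorm`. -/
def projSet (u : A ⊗[ℂ] B) : Set ℝ :=
  {r : ℝ | ∃ (n : ℕ) (f : Fin n → A) (g : Fin n → B),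
    u = ∑ i, f i ⊗ₜ[ℂ] g i ∧ r = ∑ i, ‖f i‖ * ‖g i‖}

lemma projNorm_def (u : A ⊗[ℂ] B) : projNorm A B u = sInf (projSet u) := rfl

lemma projSet_nonempty (u : A ⊗[ℂ] B) : (projSet u).Nonempty := by
  obtain ⟨S, hS⟩ := TensorProduct.exists_finset u
  refine ⟨_, S.card, fun i => (S.equivFin.symm i : A × B).1,
    fun i => (S.equivFin.symm i : A × B).2, ?_, rfl⟩
  rw [hS, ← Finset.sum_coe_sort S (f := fun x : A × B => x.1 ⊗ₜ[ℂ] x.2)]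
  exact (Equiv.sum_comp S.equivFin.symm
    (fun x : S => (x : A × B).1 ⊗ₜ[ℂ] (x : A × B).2)).symm

lemma projSet_bddBelow (u : A ⊗[ℂ] B) : BddBelow (projSet u) := by
  refine ⟨0, fun r hr => ?_⟩
  obtain ⟨n, f, g, -, rfl⟩ := hr
  exact Finset.sum_nonneg fun i _ => mul_nonneg (norm_nonneg _) (norm_nonneg _)

lemma projNorm_nonneg (u : A ⊗[ℂ] B) : 0 ≤ projNorm A B u := by
  refine le_csInf (projSet_nonempty u) fun r hr => ?_
  obtain ⟨n, f, g, -, rfl⟩ := hr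
  exact Finset.sum_nonneg fun i _ => mul_nonneg (norm_nonneg _) (norm_nonneg _)

lemma projNorm_le_of_mem {u : A ⊗[ℂ] B} {r : ℝ} (h : r ∈ projSet u) :
    projNorm A B u ≤ r :=
  csInf_le (projSet_bddBelow u) h

lemma projNorm_zero : projNorm A B (0 : A ⊗[ℂ] B) = 0 := by
  refine le_antisymm (projNorm_le_of_mem ⟨0, Fin.elim0, Fin.elim0, by simp, by simp⟩)
    (projNorm_nonneg 0)

/-- Key estimation principle for `projNorm`. -/
lemma le_mul_projNorm_of_forall {u : A ⊗[ℂ] B} {C X : ℝ} (hC : 0 ≤ C)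
    (h : ∀ r ∈ projSet u, X ≤ C * r) : X ≤ C * projNorm A B u := by
  obtain ⟨r0, hr0⟩ := projSet_nonempty u
  rcases hC.eq_or_lt with hC0 | hC0
  · have := h r0 hr0
    rw [← hC0] at this ⊢
    simpa using this
  refine le_of_forall_pos_le_add fun ε hε => ?_
  obtain ⟨r, hr, hlt⟩ := Real.lt_sInf_add_pos (projSet_nonempty u)
    (div_pos hε hC0 : (0:ℝ) < ε / C)
  have h2 : C * r ≤ C * (sInf (projSet u) + ε / C) :=
    mul_le_mul_of_nonneg_left hlt.le hC
  calc X ≤ C * r := h r hr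
    _ ≤ C * (sInf (projSet u) + ε / C) := h2
    _ = C * projNorm A B u + ε := by
        rw [projNorm_def, mul_add, mul_div_cancel₀ _ hC0.ne']

lemma projSet_add {u v : A ⊗[ℂ] B} {ru rv : ℝ} (hu : ru ∈ projSet u)
    (hv : rv ∈ projSet v) : ru + rv ∈ projSet (u + v) := by
  obtain ⟨n, f, g, hu1, hu2⟩ := hu
  obtain ⟨m, f', g', hv1, hv2⟩ := hv
  refine ⟨n + m, Fin.append f f', Fin.append g g', ?_, ?_⟩
  · rw [hu1, hv1, Fin.sum_univ_add]
    simp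
  · rw [hu2, hv2, Fin.sum_univ_add]
    simp

lemma projNorm_add_le (u v : A ⊗[ℂ] B) :
    projNorm A B (u + v) ≤ projNorm A B u + projNorm A B v := by
  refine le_of_forall_pos_le_add fun ε hε => ?_
  obtain ⟨ru, hru, hltu⟩ := Real.lt_sInf_add_pos (projSet_nonempty u) (half_pos hε)
  obtain ⟨rv, hrv, hltv⟩ := Real.lt_sInf_add_pos (projSet_nonempty v) (half_pos hε)
  have := projNorm_le_of_mem (projSet_add hru hrv)
  have e1 : projNorm A B u = sInf (projSet u) := rfl
  have e2 : projNorm A B v = sInf (projSet v) := rfl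
  linarith [add_halves ε]

lemma projNorm_smul_le (c : ℂ) (u : A ⊗[ℂ] B) :
    projNorm A B (c • u) ≤ ‖c‖ * projNorm A B u := by
  refine le_mul_projNorm_of_forall (norm_nonneg c) fun r hr => ?_
  obtain ⟨n, f, g, h1, h2⟩ := hr
  refine projNorm_le_of_mem ⟨n, fun i => c • f i, g, ?_, ?_⟩
  · rw [h1, Finset.smul_sum]
    exact Finset.sum_congr rfl fun i _ => (TensorProduct.smul_tmul' c (f i) (g i)).symm
  · rw [h2, Finset.mul_sum]
    exact Finset.sum_congr rfl fun i _ => by rw [norm_smul]; ring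

lemma projNorm_smul (c : ℂ) (u : A ⊗[ℂ] B) :
    projNorm A B (c • u) = ‖c‖ * projNorm A B u := by
  rcases eq_or_ne c 0 with rfl | hc
  · simp [projNorm_zero]
  refine le_antisymm (projNorm_smul_le c u) ?_
  have h := projNorm_smul_le c⁻¹ (c • u)
  rw [smul_smul, inv_mul_cancel₀ hc, one_smul] at h
  calc ‖c‖ * projNorm A B u ≤ ‖c‖ * (‖c⁻¹‖ * projNorm A B (c • u)) :=
        mul_le_mul_of_nonneg_left h (norm_nonneg c)
    _ = projNorm A B (c • u) := by
        rw [norm_inv, ← mul_assoc, mul_inv_cancel₀ (norm_ne_zero_iff.mpr hc), one_mul]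

lemma projNorm_neg (u : A ⊗[ℂ] B) : projNorm A B (-u) = projNorm A B u := by
  have := projNorm_smul (-1 : ℂ) u
  simpa using this

lemma projNorm_tmul_le (x : A) (y : B) : projNorm A B (x ⊗ₜ[ℂ] y) ≤ ‖x‖ * ‖y‖ := by
  refine projNorm_le_of_mem ⟨1, fun _ => x, fun _ => y, by simp, by simp⟩

/-- The projective tensor seminorm, as an `AddGroupSeminorm`. -/
def projAGS (A B : Type*) [NormedAddCommGroup A] [NormedSpace ℂ A]
    [NormedAddCommGroup B] [NormedSpace ℂ B] : AddGroupSeminorm (A ⊗[ℂ] B) where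
  toFun := projNorm A B
  map_zero' := projNorm_zero
  add_le' := projNorm_add_le
  neg' := projNorm_neg

noncomputable instance projTensorSeminormedAddCommGroup :
    SeminormedAddCommGroup (A ⊗[ℂ] B) :=
  AddGroupSeminorm.toSeminormedAddCommGroup (projAGS A B)

lemma norm_tensor_eq (u : A ⊗[ℂ] B) : ‖u‖ = projNorm A B u := rfl

noncomputable instance projTensorNormedSpace : NormedSpace ℂ (A ⊗[ℂ] B) where
  norm_smul_le c u := le_of_eq (projNorm_smul c u)

end ProjNorm

section Extend

variable {T Y : Type*} [SeminormedAddCommGroup T] [NormedSpace ℂ T]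
  [NormedAddCommGroup Y] [NormedSpace ℂ Y] [CompleteSpace Y]

/-- Extension of a continuous linear map on a seminormed space to its completion. -/
def extendCLM (f : T →L[ℂ] Y) : Completion T →L[ℂ] Y where
  toFun := Completion.extension f
  map_add' x y := by
    induction x, y using Completion.induction_on₂ with
    | hp =>
      exact isClosed_eq (Completion.continuous_extension.comp continuous_add)
        ((Completion.continuous_extension.comp continuous_fst).add
          (Completion.continuous_extension.comp continuous_snd))
    | ih x y =>
      rw [← Completion.coe_add, Completion.extension_coe f.uniformContinuous,
        Completion.extension_coe f.uniformContinuous,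
        Completion.extension_coe f.uniformContinuous, map_add]
  map_smul' c x := by
    induction x using Completion.induction_on with
    | hp =>
      exact isClosed_eq (Completion.continuous_extension.comp (continuous_const_smul c))
        ((continuous_const_smul c).comp Completion.continuous_extension)
    | ih x =>
      show Completion.extension f (c • (x : Completion T))
          = (RingHom.id ℂ) c • Completion.extension f (x : Completion T)
      rw [RingHom.id_apply, ← Completion.coe_smul,
        Completion.extension_coe f.uniformContinuous,
        Completion.extension_coe f.uniformContinuous, map_smul]
  cont := Completion.continuous_extension

@[simp] lemma extendCLM_coe (f : T →L[ℂ] Y) (x : T) :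
    extendCLM f (x : Completion T) = f x :=
  Completion.extension_coe f.uniformContinuous x

lemma extendCLM_norm_apply_le (f : T →L[ℂ] Y) {C : ℝ} (hC : 0 ≤ C)
    (h : ∀ x : T, ‖f x‖ ≤ C * ‖x‖) (y : Completion T) :
    ‖extendCLM f y‖ ≤ C * ‖y‖ := by
  induction y using Completion.induction_on with
  | hp =>
    exact isClosed_le ((extendCLM f).continuous.norm)
      (continuous_const.mul continuous_norm)
  | ih x =>
    rw [extendCLM_coe, Completion.norm_coe]
    exact h x

/-- Two continuous linear maps on a completion agreeing on the dense image coincide. -/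
lemma extensionCLM_ext {Z : Type*} [NormedAddCommGroup Z] [NormedSpace ℂ Z]
    (F G : Completion T →L[ℂ] Z) (h : ∀ x : T, F x = G x) : F = G :=
  ContinuousLinearMap.coeFn_injective <|
    Completion.denseRange_coe.equalizer F.continuous G.continuous (funext h)

end Extend

section TmulLemmas

variable {A : Type*} [NormedRing A] [NormedAlgebra ℂ A]

lemma tmulLeft_tmul (a x y : A) : tmulLeft a (x ⊗ₜ[ℂ] y) = (a * x) ⊗ₜ[ℂ] y := by
  simp [tmulLeft]

lemma tmulRight_tmul (a x y : A) : tmulRight a (x ⊗ₜ[ℂ] y) = x ⊗ₜ[ℂ] (y * a) := by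
  simp [tmulRight]

lemma tmulLeft_add (a b : A) : tmulLeft (a + b) = (tmulLeft a + tmulLeft b :
    A ⊗[ℂ] A →ₗ[ℂ] A ⊗[ℂ] A) := by
  apply TensorProduct.ext'
  intro x y
  simp [tmulLeft_tmul, add_mul, TensorProduct.add_tmul]

lemma tmulLeft_smul (c : ℂ) (a : A) : tmulLeft (c • a) = (c • tmulLeft a :
    A ⊗[ℂ] A →ₗ[ℂ] A ⊗[ℂ] A) := by
  apply TensorProduct.ext'
  intro x y
  simp [tmulLeft_tmul, smul_mul_assoc, TensorProduct.smul_tmul']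

lemma tmulRight_add (a b : A) : tmulRight (a + b) = (tmulRight a + tmulRight b :
    A ⊗[ℂ] A →ₗ[ℂ] A ⊗[ℂ] A) := by
  apply TensorProduct.ext'
  intro x y
  simp [tmulRight_tmul, mul_add, TensorProduct.tmul_add]

lemma tmulRight_smul (c : ℂ) (a : A) : tmulRight (c • a) = (c • tmulRight a :
    A ⊗[ℂ] A →ₗ[ℂ] A ⊗[ℂ] A) := by
  apply TensorProduct.ext'
  intro x y
  simp [tmulRight_tmul, mul_smul_comm, TensorProduct.tmul_smul]

lemma tmulLeft_mul (a b : A) (u : A ⊗[ℂ] A) :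
    tmulLeft (a * b) u = tmulLeft a (tmulLeft b u) := by
  have : tmulLeft (a * b) = (tmulLeft a ∘ₗ tmulLeft b : A ⊗[ℂ] A →ₗ[ℂ] A ⊗[ℂ] A) := by
    apply TensorProduct.ext'
    intro x y
    simp [tmulLeft_tmul, mul_assoc]
  rw [this]
  rfl

lemma tmulRight_mul (a b : A) (u : A ⊗[ℂ] A) :
    tmulRight (a * b) u = tmulRight b (tmulRight a u) := by
  have : tmulRight (a * b) = (tmulRight b ∘ₗ tmulRight a : A ⊗[ℂ] A →ₗ[ℂ] A ⊗[ℂ] A) := by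
    apply TensorProduct.ext'
    intro x y
    simp [tmulRight_tmul, mul_assoc]
  rw [this]
  rfl

lemma tmulLeft_comm_tmulRight (a b : A) (u : A ⊗[ℂ] A) :
    tmulLeft a (tmulRight b u) = tmulRight b (tmulLeft a u) := by
  have : (tmulLeft a ∘ₗ tmulRight b : A ⊗[ℂ] A →ₗ[ℂ] A ⊗[ℂ] A)
      = tmulRight b ∘ₗ tmulLeft a := by
    apply TensorProduct.ext'
    intro x y
    simp [tmulLeft_tmul, tmulRight_tmul]
  exact DFunLike.congr_fun this u

lemma projNorm_tmulLeft_le (a : A) (u : A ⊗[ℂ] A) :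
    projNorm A A (tmulLeft a u) ≤ ‖a‖ * projNorm A A u := by
  refine le_mul_projNorm_of_forall (norm_nonneg a) fun r hr => ?_
  obtain ⟨n, f, g, h1, h2⟩ := hr
  refine le_trans (projNorm_le_of_mem ⟨n, fun i => a * f i, g, ?_, rfl⟩) ?_
  · rw [h1, map_sum]
    exact Finset.sum_congr rfl fun i _ => tmulLeft_tmul a (f i) (g i)
  · rw [h2, Finset.mul_sum]
    refine Finset.sum_le_sum fun i _ => ?_
    calc ‖a * f i‖ * ‖g i‖ ≤ ‖a‖ * ‖f i‖ * ‖g i‖ :=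
          mul_le_mul_of_nonneg_right (norm_mul_le a (f i)) (norm_nonneg _)
      _ = ‖a‖ * (‖f i‖ * ‖g i‖) := by ring

lemma projNorm_tmulRight_le (a : A) (u : A ⊗[ℂ] A) :
    projNorm A A (tmulRight a u) ≤ ‖a‖ * projNorm A A u := by
  refine le_mul_projNorm_of_forall (norm_nonneg a) fun r hr => ?_
  obtain ⟨n, f, g, h1, h2⟩ := hr
  refine le_trans (projNorm_le_of_mem ⟨n, f, fun i => g i * a, ?_, rfl⟩) ?_
  · rw [h1, map_sum]
    exact Finset.sum_congr rfl fun i _ => tmulRight_tmul a (f i) (g i)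
  · rw [h2, Finset.mul_sum]
    refine Finset.sum_le_sum fun i _ => ?_
    calc ‖f i‖ * ‖g i * a‖ ≤ ‖f i‖ * (‖g i‖ * ‖a‖) :=
          mul_le_mul_of_nonneg_left (norm_mul_le (g i) a) (norm_nonneg _)
      _ = ‖a‖ * (‖f i‖ * ‖g i‖) := by ring

lemma norm_mul'_le_projNorm (u : A ⊗[ℂ] A) :
    ‖LinearMap.mul' ℂ A u‖ ≤ projNorm A A u := by
  have := le_mul_projNorm_of_forall (u := u) (C := 1) (X := ‖LinearMap.mul' ℂ A u‖)
    zero_le_one ?_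
  · simpa using this
  intro r hr
  obtain ⟨n, f, g, h1, h2⟩ := hr
  rw [one_mul, h1, map_sum, h2]
  refine le_trans (norm_sum_le _ _) (Finset.sum_le_sum fun i _ => ?_)
  rw [LinearMap.mul'_apply]
  exact norm_mul_le _ _

end TmulLemmas

section CompletionWitness

variable (A : Type) [NormedRing A] [NormedAlgebra ℂ A] [CompleteSpace A]

/-- The completed projective tensor square of `A`. -/
def XhatT : Type := Completion (A ⊗[ℂ] A)

noncomputable instance : NormedAddCommGroup (XhatT A) := by
  unfold XhatT; infer_instance

noncomputable instance : NormedSpace ℂ (XhatT A) := by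
  unfold XhatT; infer_instance

instance : CompleteSpace (XhatT A) := by
  unfold XhatT; infer_instance

/-- Inclusion of the algebraic tensor product into the completion. -/
def inclT : (A ⊗[ℂ] A) →L[ℂ] XhatT A := Completion.toComplL

lemma inclT_apply (u : A ⊗[ℂ] A) : inclT A u = (u : Completion (A ⊗[ℂ] A)) := rfl

lemma inclT_denseRange : DenseRange (inclT A) := Completion.denseRange_coe

lemma inclT_norm (u : A ⊗[ℂ] A) : ‖inclT A u‖ = projNorm A A u := by
  rw [inclT_apply]
  exact Completion.norm_coe u

variable {A}

/-- Left multiplication on the algebraic tensor product, as a map into the completion. -/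
def jL (a : A) : (A ⊗[ℂ] A) →L[ℂ] XhatT A :=
  LinearMap.mkContinuous ((inclT A).toLinearMap ∘ₗ tmulLeft a) ‖a‖ fun u => by
    simp only [LinearMap.coe_comp, ContinuousLinearMap.coe_coe, Function.comp_apply]
    rw [inclT_norm, norm_tensor_eq]
    exact projNorm_tmulLeft_le a u

/-- Right multiplication on the algebraic tensor product, as a map into the completion. -/
def jR (a : A) : (A ⊗[ℂ] A) →L[ℂ] XhatT A :=
  LinearMap.mkContinuous ((inclT A).toLinearMap ∘ₗ tmulRight a) ‖a‖ fun u => by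
    simp only [LinearMap.coe_comp, ContinuousLinearMap.coe_coe, Function.comp_apply]
    rw [inclT_norm, norm_tensor_eq]
    exact projNorm_tmulRight_le a u

lemma jL_apply (a : A) (u : A ⊗[ℂ] A) : jL a u = inclT A (tmulLeft a u) := rfl
lemma jR_apply (a : A) (u : A ⊗[ℂ] A) : jR a u = inclT A (tmulRight a u) := rfl

/-- The left action of `a` on the completed tensor square. -/
def lactF (a : A) : XhatT A →L[ℂ] XhatT A := extendCLM (jL a)

/-- The right action of `a` on the completed tensor square. -/
def ractF (a : A) : XhatT A →L[ℂ] XhatT A := extendCLM (jR a)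

lemma lactF_incl (a : A) (u : A ⊗[ℂ] A) :
    lactF a (inclT A u) = inclT A (tmulLeft a u) := by
  rw [inclT_apply]
  exact extendCLM_coe (jL a) u

lemma ractF_incl (a : A) (u : A ⊗[ℂ] A) :
    ractF a (inclT A u) = inclT A (tmulRight a u) := by
  rw [inclT_apply]
  exact extendCLM_coe (jR a) u

lemma lactF_norm_le (a : A) : ‖lactF a‖ ≤ ‖a‖ := by
  refine ContinuousLinearMap.opNorm_le_bound _ (norm_nonneg a) fun y => ?_
  refine extendCLM_norm_apply_le (jL a) (norm_nonneg a) (fun u => ?_) y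
  rw [jL_apply, inclT_norm, norm_tensor_eq]
  exact projNorm_tmulLeft_le a u

lemma ractF_norm_le (a : A) : ‖ractF a‖ ≤ ‖a‖ := by
  refine ContinuousLinearMap.opNorm_le_bound _ (norm_nonneg a) fun y => ?_
  refine extendCLM_norm_apply_le (jR a) (norm_nonneg a) (fun u => ?_) y
  rw [jR_apply, inclT_norm, norm_tensor_eq]
  exact projNorm_tmulRight_le a u

lemma inclT_ext {Z : Type*} [NormedAddCommGroup Z] [NormedSpace ℂ Z]
    (F G : XhatT A →L[ℂ] Z) (h : ∀ u : A ⊗[ℂ] A, F (inclT A u) = G (inclT A u)) :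
    F = G :=
  extensionCLM_ext F G h

variable (A)

/-- The left action as a continuous linear map `A →L[ℂ] X →L[ℂ] X`. -/
def lactA : A →L[ℂ] XhatT A →L[ℂ] XhatT A :=
  LinearMap.mkContinuous
    { toFun := lactF
      map_add' := fun a b => inclT_ext _ _ fun u => by
        rw [ContinuousLinearMap.add_apply, lactF_incl, lactF_incl, lactF_incl,
          tmulLeft_add, LinearMap.add_apply, map_add]
      map_smul' := fun c a => inclT_ext _ _ fun u => by
        rw [RingHom.id_apply, ContinuousLinearMap.smul_apply, lactF_incl, lactF_incl,
          tmulLeft_smul, LinearMap.smul_apply, map_smul] }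
    1 fun a => by simpa using lactF_norm_le a

/-- The right action as a continuous linear map `A →L[ℂ] X →L[ℂ] X`. -/
def ractA : A →L[ℂ] XhatT A →L[ℂ] XhatT A :=
  LinearMap.mkContinuous
    { toFun := ractF
      map_add' := fun a b => inclT_ext _ _ fun u => by
        rw [ContinuousLinearMap.add_apply, ractF_incl, ractF_incl, ractF_incl,
          tmulRight_add, LinearMap.add_apply, map_add]
      map_smul' := fun c a => inclT_ext _ _ fun u => by
        rw [RingHom.id_apply, ContinuousLinearMap.smul_apply, ractF_incl, ractF_incl,
          tmulRight_smul, LinearMap.smul_apply, map_smul] }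
    1 fun a => by simpa using ractF_norm_le a

lemma lactA_apply (a : A) : lactA A a = lactF a := rfl
lemma ractA_apply (a : A) : ractA A a = ractF a := rfl

/-- The multiplication map on the completed tensor square. -/
def pihatA : XhatT A →L[ℂ] A :=
  extendCLM (LinearMap.mkContinuous (LinearMap.mul' ℂ A) 1 fun u => by
    rw [norm_tensor_eq, one_mul]
    exact norm_mul'_le_projNorm u)

lemma pihatA_incl (u : A ⊗[ℂ] A) : pihatA A (inclT A u) = LinearMap.mul' ℂ A u := by
  rw [inclT_apply]
  exact extendCLM_coe _ u

lemma bimodA : IsBimodule (lactA A) (ractA A) := by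
  refine ⟨fun a b => ?_, fun a b => ?_, fun a b => ?_⟩
  · refine inclT_ext _ _ fun u => ?_
    simp only [lactA_apply]
    rw [ContinuousLinearMap.comp_apply, lactF_incl, lactF_incl, lactF_incl, tmulLeft_mul]
  · refine inclT_ext _ _ fun u => ?_
    simp only [ractA_apply]
    rw [ContinuousLinearMap.comp_apply, ractF_incl, ractF_incl, ractF_incl, tmulRight_mul]
  · refine inclT_ext _ _ fun u => ?_
    simp only [lactA_apply, ractA_apply]
    rw [ContinuousLinearMap.comp_apply, ContinuousLinearMap.comp_apply, ractF_incl,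
      lactF_incl, lactF_incl, ractF_incl, tmulLeft_comm_tmulRight]

/-- Packaging a biprojectivity witness from an appropriate splitting morphism. -/
def mkWitness (ρ : A →L[ℂ] XhatT A)
    (hl : ∀ a b : A, ρ (a * b) = lactA A a (ρ b))
    (hr : ∀ a b : A, ρ (a * b) = ractA A b (ρ a))
    (hπ : ∀ a : A, pihatA A (ρ a) = a) : BiprojectiveWitness A where
  X := XhatT A
  incl := (inclT A).toLinearMap
  dense_incl := inclT_denseRange A
  norm_incl := inclT_norm A
  lact := lactA A
  ract := ractA A
  bimod := bimodA A
  lact_incl := fun a u => lactF_incl a u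
  ract_incl := fun a u => ractF_incl a u
  pihat := pihatA A
  pihat_incl := pihatA_incl A
  rho := ρ
  rho_left := hl
  rho_right := hr
  pihat_rho := hπ

end CompletionWitness

section BeurlingLemmas

variable {S : Type*} [Mul S] {ω : S → ℝ} {A : Type*} [NormedRing A] [NormedAlgebra ℂ A]

lemma Beurling.norm_delta (B : BeurlingStructure S ω A) (s : S) : ‖B.delta s‖ = ω s := by
  rw [B.norm_eq]
  rw [tsum_eq_single s]
  · rw [B.coeff_delta]
    simp
  · intro t ht
    rw [B.coeff_delta]
    simp [ht]

lemma Beurling.norm_partial_sum (B : BeurlingStructure S ω A) (a : A) (F : Finset S) :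
    ‖∑ s ∈ F, B.coeff a s • B.delta s‖ = ∑ s ∈ F, ‖B.coeff a s‖ * ω s := by
  classical
  have hc : ∀ t, B.coeff (∑ s ∈ F, B.coeff a s • B.delta s) t
      = if t ∈ F then B.coeff a t else 0 := by
    intro t
    rw [map_sum, Finset.sum_apply]
    have : ∀ s ∈ F, (B.coeff (B.coeff a s • B.delta s)) t
        = if s = t then B.coeff a s else 0 := by
      intro s _
      rw [map_smul, Pi.smul_apply, B.coeff_delta, smul_eq_mul]
      by_cases h : t = s
      · subst h; simp
      · simp [h, Ne.symm h]
    rw [Finset.sum_congr rfl this, Finset.sum_ite_eq' F t (fun s => B.coeff a s)]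
  rw [B.norm_eq]
  have h0 : ∀ t ∉ F, ‖B.coeff (∑ s ∈ F, B.coeff a s • B.delta s) t‖ * ω t = 0 := by
    intro t ht
    rw [hc t, if_neg ht]
    simp
  rw [tsum_eq_sum h0]
  refine Finset.sum_congr rfl fun t ht => ?_
  rw [hc t, if_pos ht]

lemma Beurling.hasSum_norm (B : BeurlingStructure S ω A) (a : A) :
    HasSum (fun s => ‖B.coeff a s‖ * ω s) ‖a‖ := by
  have h := B.hasSum_coeff a
  have h2 : Filter.Tendsto
      (fun F : Finset S => ‖∑ s ∈ F, B.coeff a s • B.delta s‖)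
      Filter.atTop (nhds ‖a‖) := (continuous_norm.tendsto a).comp h
  have h3 : (fun F : Finset S => ‖∑ s ∈ F, B.coeff a s • B.delta s‖)
      = fun F : Finset S => ∑ s ∈ F, ‖B.coeff a s‖ * ω s :=
    funext fun F => Beurling.norm_partial_sum B a F
  rw [h3] at h2
  exact h2

lemma Beurling.delta_ext {Y : Type*} [NormedAddCommGroup Y] [NormedSpace ℂ Y]
    (B : BeurlingStructure S ω A) (F G : A →L[ℂ] Y)
    (h : ∀ s : S, F (B.delta s) = G (B.delta s)) : F = G := by
  ext a
  have hF : HasSum (fun s => F (B.coeff a s • B.delta s)) (F a) :=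
    (B.hasSum_coeff a).mapL F
  have hG : HasSum (fun s => G (B.coeff a s • B.delta s)) (G a) :=
    (B.hasSum_coeff a).mapL G
  have : (fun s => F (B.coeff a s • B.delta s))
      = fun s => G (B.coeff a s • B.delta s) := by
    funext s
    rw [map_smul, map_smul, h s]
  rw [this] at hF
  exact hF.unique hG

end BeurlingLemmas

end Stmt7Aux

/-- For a rectangular band `S ≅ L × R` (`L` left zero, `R` right zero)
with separable weight `ω = ω_L ⊗ ω_R`, `ℓ¹(S,ω)` is biprojective. -/
theorem stmt7 (L R : Type) [Mul L] [Mul R]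
    (hL : ∀ s t : L, s * t = s) (hR : ∀ s t : R, s * t = t)
    (ωL : L → ℝ) (ωR : R → ℝ) (hωL : IsWeight ωL) (hωR : IsWeight ωR)
    (A : Type) [NormedRing A] [NormedAlgebra ℂ A] [CompleteSpace A]
    (B : BeurlingStructure (L × R) (fun p => ωL p.1 * ωR p.2) A) :
    IsBiprojective A := by
  classical
  rcases isEmpty_or_nonempty (L × R) with hE | hNE
  · -- `S` is empty, so `A = 0` and the zero map works.
    haveI := hE
    have hzero : ∀ a : A, a = 0 := fun a => (B.hasSum_coeff a).unique hasSum_empty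
    refine ⟨mkWitness A 0 ?_ ?_ ?_⟩
    · intro a b
      rw [ContinuousLinearMap.zero_apply, ContinuousLinearMap.zero_apply, map_zero]
    · intro a b
      rw [ContinuousLinearMap.zero_apply, ContinuousLinearMap.zero_apply, map_zero]
    · intro a
      rw [ContinuousLinearMap.zero_apply, map_zero]
      exact (hzero a).symm
  · obtain ⟨⟨l0, r0⟩⟩ := hNE
    set C : ℝ := ωL l0 * ωR r0 with hC
    have hC0 : 0 ≤ C := le_of_lt (mul_pos (hωL.1 l0) (hωR.1 r0))
    set xs : L × R → XhatT A :=
      fun s => inclT A (B.delta (s.1, r0) ⊗ₜ[ℂ] B.delta (l0, s.2)) with hxs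
    have hxnorm : ∀ s : L × R, ‖xs s‖ ≤ C * (ωL s.1 * ωR s.2) := by
      intro s
      simp only [hxs]
      rw [inclT_norm]
      calc projNorm A A (B.delta (s.1, r0) ⊗ₜ[ℂ] B.delta (l0, s.2))
          ≤ ‖B.delta (s.1, r0)‖ * ‖B.delta (l0, s.2)‖ := projNorm_tmul_le _ _
        _ = (ωL s.1 * ωR r0) * (ωL l0 * ωR s.2) := by
            rw [Beurling.norm_delta B, Beurling.norm_delta B]
        _ = C * (ωL s.1 * ωR s.2) := by rw [hC]; ring
    have hg : ∀ a : A, HasSum (fun s : L × R => ‖B.coeff a s‖ * (ωL s.1 * ωR s.2)) ‖a‖ :=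
      fun a => Beurling.hasSum_norm B a
    have hbd : ∀ (a : A) (s : L × R),
        ‖B.coeff a s • xs s‖ ≤ C * (‖B.coeff a s‖ * (ωL s.1 * ωR s.2)) := by
      intro a s
      rw [norm_smul]
      calc ‖B.coeff a s‖ * ‖xs s‖
          ≤ ‖B.coeff a s‖ * (C * (ωL s.1 * ωR s.2)) :=
            mul_le_mul_of_nonneg_left (hxnorm s) (norm_nonneg _)
        _ = C * (‖B.coeff a s‖ * (ωL s.1 * ωR s.2)) := by ring
    have hsummable : ∀ a : A, Summable (fun s : L × R => B.coeff a s • xs s) := by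
      intro a
      exact Summable.of_norm_bounded (((hg a).summable).mul_left C) (hbd a)
    set ρlin : A →ₗ[ℂ] XhatT A :=
      { toFun := fun a => ∑' s : L × R, B.coeff a s • xs s
        map_add' := fun a b => by
          show (∑' s : L × R, B.coeff (a + b) s • xs s)
              = (∑' s : L × R, B.coeff a s • xs s) + ∑' s : L × R, B.coeff b s • xs s
          rw [← Summable.tsum_add (hsummable a) (hsummable b)]
          exact tsum_congr fun s => by rw [map_add, Pi.add_apply, add_smul]
        map_smul' := fun c a => by
          show (∑' s : L × R, B.coeff (c • a) s • xs s)
              = c • ∑' s : L × R, B.coeff a s • xs s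
          rw [← ((hsummable a).hasSum.const_smul c).tsum_eq]
          exact tsum_congr fun s => by
            rw [map_smul, Pi.smul_apply, smul_smul, smul_eq_mul] } with hρlin
    set ρ : A →L[ℂ] XhatT A := LinearMap.mkContinuous ρlin C (fun a => by
      have hnorms : Summable (fun s : L × R => ‖B.coeff a s • xs s‖) :=
        Summable.of_nonneg_of_le (fun s => norm_nonneg _) (hbd a)
          (((hg a).summable).mul_left C)
      show ‖∑' s : L × R, B.coeff a s • xs s‖ ≤ C * ‖a‖
      calc ‖∑' s : L × R, B.coeff a s • xs s‖
          ≤ ∑' s : L × R, ‖B.coeff a s • xs s‖ := norm_tsum_le_tsum_norm hnorms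
        _ ≤ ∑' s : L × R, C * (‖B.coeff a s‖ * (ωL s.1 * ωR s.2)) :=
            Summable.tsum_le_tsum (hbd a) hnorms (((hg a).summable).mul_left C)
        _ = C * ∑' s : L × R, ‖B.coeff a s‖ * (ωL s.1 * ωR s.2) := tsum_mul_left
        _ = C * ‖a‖ := by rw [(hg a).tsum_eq]) with hρ
    have hρδ : ∀ s : L × R, ρ (B.delta s) = xs s := by
      intro s
      show ∑' t : L × R, B.coeff (B.delta s) t • xs t = xs s
      rw [tsum_eq_single s]
      · rw [B.coeff_delta]
        simp
      · intro t ht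
        rw [B.coeff_delta]
        simp [ht]
    have hmul : ∀ s t : L × R, s * t = (s.1, t.2) := by
      intro s t
      cases s with | mk s1 s2 =>
      cases t with | mk t1 t2 =>
      rw [Prod.mk_mul_mk, hL, hR]
    have hδδ : ∀ s t : L × R, B.delta s * B.delta t = B.delta (s.1, t.2) := by
      intro s t
      rw [B.delta_mul, hmul]
    have hρδδ : ∀ s t : L × R,
        ρ (B.delta s * B.delta t) = lactA A (B.delta s) (ρ (B.delta t)) := by
      intro s t
      rw [hδδ s t, hρδ (s.1, t.2), hρδ t, lactA_apply]
      simp only [hxs]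
      rw [lactF_incl, tmulLeft_tmul, hδδ s (t.1, r0)]
    have hρδδR : ∀ s t : L × R,
        ρ (B.delta s * B.delta t) = ractA A (B.delta t) (ρ (B.delta s)) := by
      intro s t
      rw [hδδ s t, hρδ (s.1, t.2), hρδ s, ractA_apply]
      simp only [hxs]
      rw [ractF_incl, tmulRight_tmul, hδδ (l0, s.2) t]
    have stepA : ∀ (a : A) (t : L × R),
        ρ (a * B.delta t) = lactA A a (ρ (B.delta t)) := by
      intro a t
      have hFG := Beurling.delta_ext B
        (ρ.comp ((ContinuousLinearMap.mul ℂ A).flip (B.delta t)))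
        ((lactA A).flip (ρ (B.delta t))) (fun s => by
          simp only [ContinuousLinearMap.comp_apply, ContinuousLinearMap.flip_apply,
            ContinuousLinearMap.mul_apply']
          exact hρδδ s t)
      have := DFunLike.congr_fun hFG a
      simpa only [ContinuousLinearMap.comp_apply, ContinuousLinearMap.flip_apply,
        ContinuousLinearMap.mul_apply'] using this
    have stepB : ∀ (b : A) (s : L × R),
        ρ (B.delta s * b) = ractA A b (ρ (B.delta s)) := by
      intro b s
      have hFG := Beurling.delta_ext B
        (ρ.comp (ContinuousLinearMap.mul ℂ A (B.delta s)))
        ((ractA A).flip (ρ (B.delta s))) (fun t => by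
          simp only [ContinuousLinearMap.comp_apply, ContinuousLinearMap.flip_apply,
            ContinuousLinearMap.mul_apply']
          exact hρδδR s t)
      have := DFunLike.congr_fun hFG b
      simpa only [ContinuousLinearMap.comp_apply, ContinuousLinearMap.flip_apply,
        ContinuousLinearMap.mul_apply'] using this
    have h1 : ∀ a b : A, ρ (a * b) = lactA A a (ρ b) := by
      intro a b
      have hFG := Beurling.delta_ext B
        (ρ.comp (ContinuousLinearMap.mul ℂ A a))
        ((lactA A a).comp ρ) (fun t => by
          simp only [ContinuousLinearMap.comp_apply, ContinuousLinearMap.mul_apply']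
          exact stepA a t)
      have := DFunLike.congr_fun hFG b
      simpa only [ContinuousLinearMap.comp_apply,
        ContinuousLinearMap.mul_apply'] using this
    have h2 : ∀ a b : A, ρ (a * b) = ractA A b (ρ a) := by
      intro a b
      have hFG := Beurling.delta_ext B
        (ρ.comp ((ContinuousLinearMap.mul ℂ A).flip b))
        ((ractA A b).comp ρ) (fun s => by
          simp only [ContinuousLinearMap.comp_apply, ContinuousLinearMap.flip_apply,
            ContinuousLinearMap.mul_apply']
          exact stepB b s)
      have := DFunLike.congr_fun hFG a
      simpa only [ContinuousLinearMap.comp_apply, ContinuousLinearMap.flip_apply,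
        ContinuousLinearMap.mul_apply'] using this
    have h3 : ∀ a : A, pihatA A (ρ a) = a := by
      intro a
      have hFG := Beurling.delta_ext B ((pihatA A).comp ρ)
        (ContinuousLinearMap.id ℂ A) (fun s => by
          simp only [ContinuousLinearMap.comp_apply, ContinuousLinearMap.id_apply]
          rw [hρδ s]
          simp only [hxs]
          rw [pihatA_incl, LinearMap.mul'_apply, hδδ (s.1, r0) (l0, s.2)])
      have := DFunLike.congr_fun hFG a
      simpa only [ContinuousLinearMap.comp_apply,
        ContinuousLinearMap.id_apply] using this
    exact ⟨mkWitness A ρ h1 h2 h3⟩
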